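/- The set of symmetrically udeco tensors in Sym_d(ℂⁿ) is closed in the Euclidean topology: the image of the continuous map φ : U(n) × P(ℂⁿ) → P(Sym_d(ℂⁿ)) sending (u, [λ₁:…:λ_n]) to the class of Σᵢ λᵢ uᵢ^{⊗d} (uᵢ the columns of u) is compact, and the cone over it together with 0 is closed. -/

import Mathlib

open scoped ComplexConjugate

lemma key_id (n d k : ℕ) (hd : 0 < d) (v : Fin k → Fin n → ℂ)
    (ho : ∀ i i', i ≠ i' → ∑ j, conj (v i j) * v i' j = 0) :
    ∑ f : Fin d → Fin n, conj (∑ i, ∏ j, v i (f j)) * (∑ i, ∏ j, v i (f j))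
      = ∑ i, (∑ j, conj (v i j) * v i j) ^ d := by
  have step1 : ∀ f : Fin d → Fin n,
      conj (∑ i, ∏ j, v i (f j)) * (∑ i, ∏ j, v i (f j))
        = ∑ i, ∑ i', ∏ j, (conj (v i (f j)) * v i' (f j)) := by
    intro f
    rw [map_sum, Finset.sum_mul_sum]
    refine Finset.sum_congr rfl fun i _ => Finset.sum_congr rfl fun i' _ => ?_
    rw [map_prod, ← Finset.prod_mul_distrib]
  have step2 : ∀ i i' : Fin k,
      ∑ f : Fin d → Fin n, ∏ j, (conj (v i (f j)) * v i' (f j))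
        = (∑ x, conj (v i x) * v i' x) ^ d := by
    intro i i'
    rw [Fintype.sum_pow]
  calc ∑ f : Fin d → Fin n, conj (∑ i, ∏ j, v i (f j)) * (∑ i, ∏ j, v i (f j))
      = ∑ f : Fin d → Fin n, ∑ i, ∑ i', ∏ j, (conj (v i (f j)) * v i' (f j)) := by
        exact Finset.sum_congr rfl fun f _ => step1 f
    _ = ∑ i, ∑ i', ∑ f : Fin d → Fin n, ∏ j, (conj (v i (f j)) * v i' (f j)) := by
        rw [Finset.sum_comm]
        exact Finset.sum_congr rfl fun i _ => Finset.sum_comm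
    _ = ∑ i, ∑ i', (∑ x, conj (v i x) * v i' x) ^ d := by
        exact Finset.sum_congr rfl fun i _ => Finset.sum_congr rfl fun i' _ => step2 i i'
    _ = ∑ i, (∑ x, conj (v i x) * v i x) ^ d := by
        refine Finset.sum_congr rfl fun i _ => ?_
        rw [Finset.sum_eq_single i]
        · intro i' _ hne
          rw [ho i i' (Ne.symm hne), zero_pow hd.ne']
        · intro h; exact absurd (Finset.mem_univ i) h

lemma card_le_aux (n k : ℕ) (v : Fin k → Fin n → ℂ) (hz : ∀ i, v i ≠ 0)
    (ho : ∀ i i', i ≠ i' → ∑ j, conj (v i j) * v i' j = 0) : k ≤ n := by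
  let w : Fin k → EuclideanSpace ℂ (Fin n) := fun i => WithLp.toLp 2 (v i)
  have hli : LinearIndependent ℂ w := by
    apply linearIndependent_of_ne_zero_of_inner_eq_zero
    · intro i h
      exact hz i (by simpa [w] using h)
    · intro i i' hne
      simpa [EuclideanSpace.inner_eq_star_dotProduct, w, dotProduct, mul_comm] using ho i i' hne
  have := hli.fintype_card_le_finrank
  simpa using this

lemma isClosed_image (n d k : ℕ) (hd : 0 < d) :
    IsClosed ((fun (v : Fin k → Fin n → ℂ) (f : Fin d → Fin n) => ∑ i, ∏ j, v i (f j)) ''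
      {v | ∀ i i', i ≠ i' → ∑ j, conj (v i j) * v i' j = 0}) := by
  set F : (Fin k → Fin n → ℂ) → ((Fin d → Fin n) → ℂ) :=
    fun v f => ∑ i, ∏ j, v i (f j) with hF
  set D : Set (Fin k → Fin n → ℂ) :=
    {v | ∀ i i', i ≠ i' → ∑ j, conj (v i j) * v i' j = 0} with hD
  set Q : ((Fin d → Fin n) → ℂ) → ℝ := fun T => ∑ f, Complex.normSq (T f) with hQ
  have hQcont : Continuous Q := by
    apply continuous_finset_sum
    intro f _
    exact Complex.continuous_normSq.comp (continuous_apply f)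
  have hFcont : Continuous F := by
    apply continuous_pi
    intro f
    apply continuous_finset_sum
    intro i _
    apply continuous_finset_prod
    intro j _
    exact (continuous_apply (f j)).comp (continuous_apply i)
  have hQnonneg : ∀ T, 0 ≤ Q T := fun T =>
    Finset.sum_nonneg fun f _ => Complex.normSq_nonneg _
  -- the key inequality
  have hkey : ∀ v ∈ D, ∀ i, (∑ j, Complex.normSq (v i j)) ^ d ≤ Q (F v) := by
    intro v hv i
    have h1 : (Q (F v) : ℂ) = ∑ i, ((∑ j, Complex.normSq (v i j) : ℝ) : ℂ) ^ d := by
      have := key_id n d k hd v hv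
      rw [hQ]
      push_cast
      simp only [Complex.normSq_eq_conj_mul_self]
      exact this
    have h2 : Q (F v) = ∑ i, (∑ j, Complex.normSq (v i j)) ^ d := by
      apply Complex.ofReal_injective
      rw [h1]; push_cast; ring
    rw [h2]
    exact Finset.single_le_sum
      (fun i _ => pow_nonneg (Finset.sum_nonneg fun j _ => Complex.normSq_nonneg _) d)
      (Finset.mem_univ i)
  have hDclosed : IsClosed D := by
    have : D = ⋂ i, ⋂ i', {v : Fin k → Fin n → ℂ |
        i ≠ i' → ∑ j, conj (v i j) * v i' j = 0} := by
      ext v; simp [hD, Set.mem_iInter]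
    rw [this]
    refine isClosed_iInter fun i => isClosed_iInter fun i' => ?_
    by_cases h : i = i'
    · simp [h]
    · have : {v : Fin k → Fin n → ℂ | i ≠ i' → ∑ j, conj (v i j) * v i' j = 0}
          = {v | ∑ j, conj (v i j) * v i' j = 0} := by
        ext v; simp [h]
      rw [this]
      apply isClosed_eq _ continuous_const
      apply continuous_finset_sum
      intro j _
      exact ((Complex.continuous_conj.comp ((continuous_apply j).comp
        (continuous_apply i))).mul ((continuous_apply j).comp (continuous_apply i')))
  -- compactness of bounded slices
  have hC : ∀ R : ℝ, IsCompact (D ∩ {v | ∀ i, ∑ j, Complex.normSq (v i j) ≤ R}) := by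
    intro R
    have hsub : D ∩ {v | ∀ i, ∑ j, Complex.normSq (v i j) ≤ R}
        ⊆ Set.univ.pi fun _ : Fin k => Set.univ.pi fun _ : Fin n =>
            Metric.closedBall (0 : ℂ) (Real.sqrt (max R 0)) := by
      rintro v ⟨-, hb⟩
      intro i _
      intro j _
      simp only [Metric.mem_closedBall, dist_zero_right]
      have h1 : Complex.normSq (v i j) ≤ max R 0 := by
        refine le_trans ?_ (le_max_left _ _)
        refine le_trans ?_ (hb i)
        exact Finset.single_le_sum (fun j _ => Complex.normSq_nonneg _) (Finset.mem_univ j)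
      have := Real.sqrt_le_sqrt h1
      rwa [Complex.norm_def]
    refine IsCompact.of_isClosed_subset ?_ ?_ hsub
    · exact isCompact_univ_pi fun _ => isCompact_univ_pi fun _ => isCompact_closedBall _ _
    · refine hDclosed.inter ?_
      have : {v : Fin k → Fin n → ℂ | ∀ i, ∑ j, Complex.normSq (v i j) ≤ R}
          = ⋂ i, {v | ∑ j, Complex.normSq (v i j) ≤ R} := by
        ext v; simp
      rw [this]
      refine isClosed_iInter fun i => ?_
      apply IsClosed.preimage (f := fun v : Fin k → Fin n → ℂ => ∑ j, Complex.normSq (v i j))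
        ?_ isClosed_Iic
      apply continuous_finset_sum
      intro j _
      exact Complex.continuous_normSq.comp ((continuous_apply j).comp (continuous_apply i))
  -- now show the image is closed via open complement
  rw [← isOpen_compl_iff, isOpen_iff_mem_nhds]
  intro T hT
  set R : ℝ := Q T + 1 with hR
  have hRpos : 1 ≤ R := by simp [hR]; exact hQnonneg T
  have hKcomp : IsCompact (F '' (D ∩ {v | ∀ i, ∑ j, Complex.normSq (v i j) ≤ R})) :=
    (hC R).image hFcont
  have hTK : T ∉ F '' (D ∩ {v | ∀ i, ∑ j, Complex.normSq (v i j) ≤ R}) := by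
    intro hmem
    exact hT (Set.image_mono Set.inter_subset_left hmem)
  have hU : IsOpen (Q ⁻¹' Set.Iio R ∩ (F '' (D ∩ {v | ∀ i, ∑ j, Complex.normSq (v i j) ≤ R}))ᶜ) :=
    (hQcont.isOpen_preimage _ isOpen_Iio).inter hKcomp.isClosed.isOpen_compl
  refine Filter.mem_of_superset (hU.mem_nhds ⟨?_, hTK⟩) ?_
  · simp [hR]
  · rintro T' ⟨hT'1, hT'2⟩ ⟨v, hv, rfl⟩
    apply hT'2
    refine ⟨v, ⟨hv, fun i => ?_⟩, rfl⟩
    have h1 : (∑ j, Complex.normSq (v i j)) ^ d ≤ Q (F v) := hkey v hv i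
    have h2 : Q (F v) < R := hT'1
    set s : ℝ := ∑ j, Complex.normSq (v i j) with hs
    have hsnn : 0 ≤ s := Finset.sum_nonneg fun j _ => Complex.normSq_nonneg _
    by_cases hcase : s ≤ 1
    · linarith
    · push_neg at hcase
      have : s ≤ s ^ d := le_self_pow₀ hcase.le hd.ne'
      linarith

lemma isClosed_image' (n d k : ℕ) :
    IsClosed ((fun (v : Fin k → Fin n → ℂ) (f : Fin d → Fin n) => ∑ i, ∏ j, v i (f j)) ''
      {v | ∀ i i', i ≠ i' → ∑ j, conj (v i j) * v i' j = 0}) := by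
  rcases Nat.eq_zero_or_pos d with hd | hd
  · subst hd
    have : ((fun (v : Fin k → Fin n → ℂ) (f : Fin 0 → Fin n) => ∑ i, ∏ j, v i (f j)) ''
        {v | ∀ i i', i ≠ i' → ∑ j, conj (v i j) * v i' j = 0})
        = {fun _ => (k : ℂ)} := by
      apply Set.Subset.antisymm
      · rintro T ⟨v, hv, rfl⟩
        funext f
        simp
      · rintro T hT
        refine ⟨0, fun i i' h => by simp, ?_⟩
        simp at hT
        subst hT
        funext f
        simp
    rw [this]
    exact isClosed_singleton
  · exact isClosed_image n d k hd

/-- A tensor in coordinates: `T : (Fin d → Fin n) → ℂ`, with `T f` the coefficient of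
`e_{f 0} ⊗ ⋯ ⊗ e_{f (d-1)}`. It is symmetrically udeco if it is a sum of `d`-th tensor
powers of nonzero, pairwise orthogonal vectors in `ℂⁿ`. The set of such tensors is
closed in the Euclidean topology. -/
theorem stmt_18 (n d : ℕ) :
    IsClosed {T : (Fin d → Fin n) → ℂ |
      ∃ (k : ℕ) (v : Fin k → Fin n → ℂ),
        (∀ i, v i ≠ 0) ∧
        (∀ i i', i ≠ i' → ∑ j, conj (v i j) * v i' j = 0) ∧
        T = fun f => ∑ i, ∏ j, v i (f j)} := by
  classical
  have hset : {T : (Fin d → Fin n) → ℂ |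
      ∃ (k : ℕ) (v : Fin k → Fin n → ℂ),
        (∀ i, v i ≠ 0) ∧
        (∀ i i', i ≠ i' → ∑ j, conj (v i j) * v i' j = 0) ∧
        T = fun f => ∑ i, ∏ j, v i (f j)}
      = ⋃ k ∈ Finset.range (n + 1),
          ((fun (v : Fin k → Fin n → ℂ) (f : Fin d → Fin n) => ∑ i, ∏ j, v i (f j)) ''
            {v | ∀ i i', i ≠ i' → ∑ j, conj (v i j) * v i' j = 0}) := by
    ext T
    constructor
    · rintro ⟨k, v, hz, ho, rfl⟩
      have hk : k ≤ n := card_le_aux n k v hz ho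
      refine Set.mem_biUnion (by simp [Nat.lt_succ_iff, hk] : k ∈ Finset.range (n+1)) ?_
      exact ⟨v, ho, rfl⟩
    · rintro h
      rw [Set.mem_iUnion] at h
      obtain ⟨k, h⟩ := h
      rw [Set.mem_iUnion] at h
      obtain ⟨hk, v, hv, rfl⟩ := h
      rw [Finset.mem_range, Nat.lt_succ_iff] at hk
      rcases Nat.eq_zero_or_pos d with hd | hd
      · -- d = 0 : the tensor is the constant k; use the standard basis vectors
        subst hd
        refine ⟨k, fun i j => if (j : ℕ) = (i : ℕ) then 1 else 0, ?_, ?_, ?_⟩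
        · intro i h
          have := congrFun h ⟨(i : ℕ), lt_of_lt_of_le i.2 hk⟩
          simp at this
        · intro i i' hne
          rw [Finset.sum_eq_zero]
          intro j _
          rcases eq_or_ne (j : ℕ) (i : ℕ) with h1 | h1
          · have h2 : (j : ℕ) ≠ (i' : ℕ) := by
              rw [h1]; exact fun h => hne (Fin.ext h)
            have h3 : ¬ (i : ℕ) = (i' : ℕ) := fun h => hne (Fin.ext h)
            simp [h1, h2, h3]
          · simp [h1]
        · funext f
          simp
      · -- d > 0 : drop the zero vectors
        set I : Finset (Fin k) := Finset.univ.filter (fun i => v i ≠ 0) with hI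
        set e := I.orderIsoOfFin rfl with he
        refine ⟨I.card, fun m => v (e m), ?_, ?_, ?_⟩
        · intro m
          exact (Finset.mem_filter.mp (e m).2).2
        · intro m m' hne
          apply hv
          intro hcontra
          exact hne (e.injective (Subtype.ext hcontra))
        · funext f
          have h1 : ∑ m : Fin I.card, ∏ j, v (e m) (f j)
              = ∑ x : {x // x ∈ I}, ∏ j, v (x : Fin k) (f j) :=
            Fintype.sum_equiv e.toEquiv _ _ (fun m => rfl)
          have h2 : ∑ x : {x // x ∈ I}, ∏ j, v (x : Fin k) (f j)
              = ∑ i ∈ I, ∏ j, v i (f j) := Finset.sum_coe_sort I (fun i => ∏ j, v i (f j))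
          have h3 : ∑ i ∈ I, ∏ j, v i (f j) = ∑ i, ∏ j, v i (f j) := by
            apply Finset.sum_subset (Finset.subset_univ I)
            intro i _ hiI
            have hvi : v i = 0 := by
              by_contra hne0
              exact hiI (Finset.mem_filter.mpr ⟨Finset.mem_univ i, hne0⟩)
            apply Finset.prod_eq_zero (Finset.mem_univ (⟨0, hd⟩ : Fin d))
            simp [hvi]
          rw [h1, h2, h3]
  rw [hset]
  apply Set.Finite.isClosed_biUnion (Finset.range (n+1)).finite_toSet
  intro k _
  exact isClosed_image' n d k
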